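/- Let p be an odd prime and G cyclic of order p. If M is a Z_p[G]-module sitting in a nonsplit extension 0 -> Z_p[G] -> M -> Z/pZ -> 0 (with trivial G-action on Z/pZ), then M is isomorphic to Z_p + A as a Z_p[G]-module, where A is the augmentation kernel. -/

import Mathlib

/-!
STATEMENT 8: `p` odd prime, `G = ⟨τ⟩` cyclic of order `p`.  If a
`ℤ_p[G]`-module `M` (a `ℤ_[p]`-module with endomorphism `T`, `T^p = 1`) sits
in a nonsplit extension `0 → ℤ_p[G] → M → ℤ/pℤ → 0` (with trivial action on
`ℤ/pℤ`), then `M ≅ ℤ_p ⊕ A` as `ℤ_p[G]`-modules, where `ℤ_p[G]` is realised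
as `ZMod p → ℤ_[p]` with the shift action and `A` is the augmentation kernel.
Nonsplitness means there is no `G`-invariant submodule complementary to the
image of `ℤ_p[G]`; equivalently no equivariant `ℤ_p`-semilinear additive
section of the projection.
-/

open Finset

def CyclicIso (R : Type*) [CommRing R] {M N : Type*} [AddCommGroup M] [Module R M]
    [AddCommGroup N] [Module R N] (T : Module.End R M) (S : Module.End R N) : Prop :=
  ∃ e : M ≃ₗ[R] N, ∀ x, e (T x) = S (e x)

noncomputable def shiftEnd (p : ℕ) [Fact p.Prime] :
    Module.End ℤ_[p] (ZMod p → ℤ_[p]) :=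
  LinearMap.funLeft ℤ_[p] ℤ_[p] (fun i => i - 1)

noncomputable def augSum (p : ℕ) [Fact p.Prime] :
    (ZMod p → ℤ_[p]) →ₗ[ℤ_[p]] ℤ_[p] :=
  ∑ i : ZMod p, LinearMap.proj i

noncomputable def augIdeal (p : ℕ) [Fact p.Prime] :
    Submodule ℤ_[p] (ZMod p → ℤ_[p]) :=
  LinearMap.ker (augSum p)

section Aux

variable (p : ℕ) [Fact p.Prime]

lemma shift_apply (x : ZMod p → ℤ_[p]) (i : ZMod p) : shiftEnd p x i = x (i - 1) := rfl

lemma augSum_apply (a : ZMod p → ℤ_[p]) : augSum p a = ∑ i : ZMod p, a i := by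
  simp [augSum]

lemma sum_range_zmod (g : ZMod p → ℤ_[p]) :
    ∑ k ∈ Finset.range p, g (k : ZMod p) = ∑ i : ZMod p, g i := by
  refine Finset.sum_nbij' (fun k => (k : ZMod p)) (fun i => i.val) ?_ ?_ ?_ ?_ ?_
  · intro a _; exact Finset.mem_univ _
  · intro i _; exact Finset.mem_range.mpr (ZMod.val_lt i)
  · intro a ha; exact ZMod.val_cast_of_lt (Finset.mem_range.mp ha)
  · intro i _; simp [ZMod.natCast_val, ZMod.cast_id]
  · intro a _; rfl

lemma shift_pow_apply (k : ℕ) (x : ZMod p → ℤ_[p]) (i : ZMod p) :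
    ((shiftEnd p ^ k) x) i = x (i - (k : ZMod p)) := by
  induction k generalizing i with
  | zero => simp
  | succ n ih =>
    rw [pow_succ', Module.End.mul_apply, shift_apply, ih]
    push_cast
    ring_nf

lemma shift_sum_apply (a : ZMod p → ℤ_[p]) (i : ZMod p) :
    (∑ j ∈ Finset.range p, (shiftEnd p ^ j) a) i = augSum p a := by
  rw [Finset.sum_apply]
  rw [augSum_apply]
  calc ∑ j ∈ Finset.range p, ((shiftEnd p ^ j) a) i
      = ∑ j ∈ Finset.range p, a (i - (j : ZMod p)) := by
        exact Finset.sum_congr rfl (fun j _ => shift_pow_apply p j a i)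
    _ = ∑ j : ZMod p, a (i - j) := sum_range_zmod p (fun j => a (i - j))
    _ = ∑ j : ZMod p, a j := Fintype.sum_equiv (Equiv.subLeft i) _ _ (fun x => rfl)

lemma shift_const (c : ZMod p → ℤ_[p]) (h : shiftEnd p c = c) (i : ZMod p) : c i = c 0 := by
  have h1 : ∀ j : ZMod p, c (j - 1) = c j := fun j => congrFun h j
  have key : ∀ k : ℕ, ∀ j : ZMod p, c (j - (k : ZMod p)) = c j := by
    intro k
    induction k with
    | zero => simp
    | succ n ih =>
      intro j
      have : j - ((n + 1 : ℕ) : ZMod p) = (j - (n:ZMod p)) - 1 := by push_cast; ring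
      rw [this, h1, ih]
  have := key i.val i
  rw [ZMod.natCast_val, ZMod.cast_id, sub_self] at this
  exact this.symm

lemma shift_surj (a : ZMod p → ℤ_[p]) (ha : augSum p a = 0) :
    ∃ b : ZMod p → ℤ_[p], shiftEnd p b - b = a := by
  have hp : 0 < p := (Fact.out (p := p.Prime)).pos
  refine ⟨fun i => -∑ j ∈ Finset.range (i.val + 1), a (j : ZMod p), funext fun i => ?_⟩
  have hεa : ∑ j ∈ Finset.range p, a (j : ZMod p) = 0 := by
    rw [sum_range_zmod]; rw [augSum_apply] at ha; exact ha
  show (fun i => -∑ j ∈ Finset.range (i.val + 1), a (j : ZMod p)) (i - 1)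
      - (-∑ j ∈ Finset.range (i.val + 1), a (j : ZMod p)) = a i
  by_cases h0 : i = 0
  · subst h0
    have hm1 : ((0 : ZMod p) - 1) = ((p - 1 : ℕ) : ZMod p) := by
      push_cast [Nat.cast_sub hp]
      simp
    have hval : ((0 : ZMod p) - 1).val = p - 1 := by
      rw [hm1, ZMod.val_cast_of_lt (Nat.sub_lt hp one_pos)]
    simp only []
    rw [hval, Nat.sub_add_cancel hp, hεa]
    simp
  · have hv : i.val ≠ 0 := fun h => h0 (by
      have := ZMod.natCast_val (R := ZMod p) i
      rw [ZMod.cast_id] at this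
      rw [← this, h, Nat.cast_zero])
    have hval : (i - 1).val = i.val - 1 := by
      have hcast : ((i.val - 1 : ℕ) : ZMod p) = i - 1 := by
        rw [Nat.cast_sub (Nat.one_le_iff_ne_zero.mpr hv)]
        simp [ZMod.natCast_val, ZMod.cast_id]
      rw [← hcast, ZMod.val_cast_of_lt (lt_of_le_of_lt (Nat.sub_le _ _) (ZMod.val_lt i))]
    simp only [hval, Nat.sub_add_cancel (Nat.one_le_iff_ne_zero.mpr hv)]
    rw [Finset.sum_range_succ (fun j => a (j : ZMod p)) i.val]
    simp [ZMod.natCast_val, ZMod.cast_id]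

lemma nsmul_congr_mod {M : Type} [AddCommGroup M] (t : M) (hpt : p • t = 0)
    {n m : ℕ} (h : (n : ZMod p) = (m : ZMod p)) : n • t = m • t := by
  have hmod : n % p = m % p := (ZMod.natCast_eq_natCast_iff n m p).mp h
  have key : ∀ k : ℕ, k • t = (k % p) • t := by
    intro k
    conv_lhs => rw [← Nat.mod_add_div k p]
    rw [add_smul, mul_comm, mul_smul, hpt, smul_zero, add_zero]
  rw [key n, key m, hmod]

lemma padic_smul_torsion {M : Type} [AddCommGroup M] [Module ℤ_[p] M]
    (t : M) (hpt : p • t = 0) (c : ℤ_[p]) :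
    c • t = (PadicInt.toZMod c).val • t := by
  have hker : PadicInt.toZMod (c - ((PadicInt.toZMod c).val : ℤ_[p])) = 0 := by
    rw [map_sub, map_natCast, ZMod.natCast_val, ZMod.cast_id, sub_self]
  have : (c - ((PadicInt.toZMod c).val : ℤ_[p])) ∈ RingHom.ker (PadicInt.toZMod (p := p)) :=
    hker
  rw [PadicInt.ker_toZMod, PadicInt.maximalIdeal_eq_span_p, Ideal.mem_span_singleton] at this
  obtain ⟨d, hd⟩ := this
  have hc : c = ((PadicInt.toZMod c).val : ℤ_[p]) + (p : ℤ_[p]) * d := by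
    rw [← hd]; ring
  have hpzero : (p : ℤ_[p]) • t = 0 := by
    rw [← Nat.cast_smul_eq_nsmul ℤ_[p] p t] at hpt
    exact hpt
  conv_lhs => rw [hc]
  rw [add_smul, mul_comm, mul_smul, hpzero, smul_zero, add_zero, Nat.cast_smul_eq_nsmul]

lemma split_of_torsion {M : Type} [AddCommGroup M] [Module ℤ_[p] M]
    (T : Module.End ℤ_[p] M) (π : M →+ ZMod p)
    (t : M) (hpt : p • t = 0) (hTt : T t = t) (hπt : π t ≠ 0) :
    ∃ s : ZMod p →+ M, (∀ y, π (s y) = y) ∧ (∀ y, T (s y) = s y) ∧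
      (∀ (c : ℤ_[p]) (y : ZMod p), s (PadicInt.toZMod c * y) = c • s y) := by
  set k := π t with hk
  have hkinv : k⁻¹ * k = 1 := inv_mul_cancel₀ hπt
  refine ⟨AddMonoidHom.mk' (fun y => (y * k⁻¹).val • t) ?_, ?_, ?_, ?_⟩
  · intro y z
    show ((y + z) * k⁻¹).val • t = (y * k⁻¹).val • t + (z * k⁻¹).val • t
    have hcast : (((y + z) * k⁻¹).val : ZMod p) = (((y * k⁻¹).val + (z * k⁻¹).val : ℕ) : ZMod p) := by
      push_cast
      simp only [ZMod.natCast_val, ZMod.cast_id]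
      ring
    rw [nsmul_congr_mod p t hpt hcast, add_smul]
  · intro y
    simp only [AddMonoidHom.mk'_apply]
    rw [map_nsmul, ← hk]
    rw [nsmul_eq_mul]
    rw [ZMod.natCast_val, ZMod.cast_id]
    rw [mul_assoc, hkinv, mul_one]
  · intro y
    simp only [AddMonoidHom.mk'_apply, map_nsmul, hTt]
  · intro c y
    show (PadicInt.toZMod c * y * k⁻¹).val • t = c • ((y * k⁻¹).val • t)
    rw [smul_comm c ((y * k⁻¹).val) t, padic_smul_torsion p t hpt c, ← mul_smul]
    refine nsmul_congr_mod p t hpt ?_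
    push_cast
    simp only [ZMod.natCast_val, ZMod.cast_id]
    ring

end Aux

theorem stmt_8 (p : ℕ) [Fact p.Prime] (hp : Odd p)
    (M : Type) [AddCommGroup M] [Module ℤ_[p] M]
    (T : Module.End ℤ_[p] M) (hT : T ^ p = 1)
    -- the restriction of the shift to the augmentation kernel
    (TA : Module.End ℤ_[p] ↥(augIdeal p))
    (hTA : ∀ x : ↥(augIdeal p), (TA x : ZMod p → ℤ_[p]) = shiftEnd p (x : ZMod p → ℤ_[p]))
    -- the extension 0 → ℤ_p[G] → M → ℤ/pℤ → 0
    (ι : (ZMod p → ℤ_[p]) →ₗ[ℤ_[p]] M) (hι : Function.Injective ι)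
    (hιe : ∀ x, ι (shiftEnd p x) = T (ι x))
    (π : M →+ ZMod p) (hπ : Function.Surjective π)
    (hπe : ∀ x, π (T x) = π x)
    (hπs : ∀ (c : ℤ_[p]) (x : M), π (c • x) = PadicInt.toZMod c * π x)
    (hexact : Function.Exact ι π)
    -- nonsplitness: no equivariant ℤ_p-semilinear additive section of π
    (hnonsplit : ¬ ∃ s : ZMod p →+ M, (∀ y, π (s y) = y) ∧ (∀ y, T (s y) = s y) ∧
        (∀ (c : ℤ_[p]) (y : ZMod p), s (PadicInt.toZMod c * y) = c • s y)) :
    CyclicIso ℤ_[p] T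
      (LinearMap.prodMap (1 : Module.End ℤ_[p] ℤ_[p]) TA) := by
  classical
  have hppos : 0 < p := (Fact.out (p := p.Prime)).pos
  set σ := shiftEnd p with hσdef
  -- exactness helpers
  have hker : ∀ x : M, π x = 0 → ∃ d, ι d = x := fun x hx => (hexact x).mp hx
  have hπι : ∀ d, π (ι d) = 0 := fun d => (hexact (ι d)).mpr ⟨d, rfl⟩
  -- iteration lemmas
  have hcomm : ∀ (k : ℕ) (a : ZMod p → ℤ_[p]), (T ^ k) (ι a) = ι ((σ ^ k) a) := by
    intro k
    induction k with
    | zero => intro a; simp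
    | succ n ih =>
      intro a
      rw [pow_succ', Module.End.mul_apply, pow_succ', Module.End.mul_apply, ih, ← hιe]
  have hfix : ∀ (k : ℕ) (x : M), T x = x → (T ^ k) x = x := by
    intro k x hx
    induction k with
    | zero => simp
    | succ n ih => rw [pow_succ, Module.End.mul_apply, hx, ih]
  have hπpow : ∀ (k : ℕ) (x : M), π ((T ^ k) x) = π x := by
    intro k x
    induction k with
    | zero => simp
    | succ n ih => rw [pow_succ', Module.End.mul_apply, hπe, ih]
  -- Step B: find an invariant element mapping to 1
  obtain ⟨m0, hm0⟩ := hπ 1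
  obtain ⟨a, ha⟩ := hker (T m0 - m0) (by rw [map_sub, hπe, sub_self])
  have hTm0 : T m0 = m0 + ι a := by rw [ha]; abel
  have hiter : ∀ k : ℕ, (T ^ k) m0 = m0 + ι (∑ j ∈ Finset.range k, (σ ^ j) a) := by
    intro k
    induction k with
    | zero => simp
    | succ n ih =>
      have h2 : T (ι (∑ j ∈ Finset.range n, (σ ^ j) a))
          = ι (∑ j ∈ Finset.range n, (σ ^ (j + 1)) a) := by
        rw [← hιe]
        congr 1
        rw [map_sum]
        exact Finset.sum_congr rfl fun j _ => by rw [pow_succ', Module.End.mul_apply]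
      rw [pow_succ', Module.End.mul_apply, ih, map_add, hTm0, h2,
        Finset.sum_range_succ', map_add]
      simp only [pow_zero, Module.End.one_apply]
      abel
  have hSp : (∑ j ∈ Finset.range p, (σ ^ j) a) = 0 := by
    have h1 := hiter p
    rw [hT, Module.End.one_apply] at h1
    have h2 : ι (∑ j ∈ Finset.range p, (σ ^ j) a) = ι 0 := by
      rw [map_zero]
      linear_combination (norm := abel) h1.symm
    exact hι h2
  have hεa : augSum p a = 0 := by
    have := congrFun hSp 0
    rw [shift_sum_apply p a 0] at this
    exact this
  obtain ⟨b, hb⟩ := shift_surj p a hεa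
  rw [← hσdef] at hb
  set m1 := m0 - ι b with hm1def
  have hTm1 : T m1 = m1 := by
    rw [hm1def, map_sub, ← hιe, hTm0, ← hb, map_sub]
    abel
  have hπm1 : π m1 = 1 := by
    rw [hm1def, map_sub, hm0, hπι, sub_zero]
  -- Step C: p • m1 lands in ι, with constant coordinates
  obtain ⟨c, hc⟩ := hker (p • m1) (by
    rw [map_nsmul, hπm1]
    simp [nsmul_eq_mul, ZMod.natCast_self])
  have hσc : σ c = c := by
    apply hι
    rw [hιe, hc, map_nsmul, hTm1]
  have hcconst : ∀ i, c i = c 0 := shift_const p c (hσdef ▸ hσc)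
  set lam := c 0 with hlam
  set ν : ZMod p → ℤ_[p] := fun _ => 1 with hν
  have hσν : σ ν = ν := funext fun _ => rfl
  -- rule out the non-unit case using nonsplitness
  have hunit : IsUnit lam := by
    by_contra hu
    have hmem : lam ∈ IsLocalRing.maximalIdeal ℤ_[p] :=
      (IsLocalRing.mem_maximalIdeal lam).mpr (mem_nonunits_iff.mpr hu)
    rw [PadicInt.maximalIdeal_eq_span_p, Ideal.mem_span_singleton] at hmem
    obtain ⟨μ, hμ⟩ := hmem
    set t := m1 - ι (μ • ν) with ht
    have hσμν : σ (μ • ν) = μ • ν := by rw [map_smul, hσν]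
    have hTt : T t = t := by rw [ht, map_sub, hTm1, ← hιe, hσμν]
    have hpt : p • t = 0 := by
      have h1 : p • t = p • m1 - p • (ι (μ • ν)) := by rw [ht, smul_sub]
      rw [h1, ← hc, ← map_nsmul ι p (μ • ν), ← map_sub]
      have h2 : c - p • (μ • ν) = 0 := by
        funext i
        simp only [Pi.sub_apply, Pi.smul_apply, hν, smul_eq_mul, mul_one]
        rw [hcconst i, hμ]
        simp [nsmul_eq_mul]
      rw [h2, map_zero]
    have hπt : π t ≠ 0 := by
      rw [ht, map_sub, hπm1, hπι, sub_zero]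
      exact one_ne_zero
    obtain ⟨s, h1, h2, h3⟩ := split_of_torsion p T π t hpt hTt hπt
    exact hnonsplit ⟨s, h1, h2, h3⟩
  obtain ⟨u, hu⟩ := hunit
  set m := ((↑u⁻¹ : ℤ_[p])) • m1 with hm
  have hTm : T m = m := by rw [hm, map_smul, hTm1]
  have hπm : π m = PadicInt.toZMod (↑u⁻¹ : ℤ_[p]) := by rw [hm, hπs, hπm1, mul_one]
  have hπmne : π m ≠ 0 := by
    rw [hπm]
    intro h
    have : PadicInt.toZMod ((↑u⁻¹ : ℤ_[p]) * (↑u : ℤ_[p])) = 0 := by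
      rw [map_mul, h, zero_mul]
    rw [Units.inv_mul, map_one] at this
    exact one_ne_zero this
  have hpm : p • m = ι ν := by
    rw [hm, smul_comm, ← hc, ← map_smul]
    congr 1
    funext i
    simp only [Pi.smul_apply, smul_eq_mul, hν]
    rw [hcconst i, ← hu, Units.inv_mul]
  -- Step D: the norm endomorphism
  set NT : Module.End ℤ_[p] M := ∑ k ∈ Finset.range p, T ^ k with hNTdef
  have hNT_apply : ∀ x : M, NT x = ∑ k ∈ Finset.range p, (T ^ k) x := fun x => by
    rw [hNTdef]
    exact LinearMap.sum_apply _ _ _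
  have hπNT : ∀ x, π (NT x) = 0 := fun x => by
    rw [hNT_apply, map_sum, Finset.sum_congr rfl (fun k _ => hπpow k x),
      Finset.sum_const, Finset.card_range]
    simp [nsmul_eq_mul, ZMod.natCast_self]
  have hTsum : (∑ k ∈ Finset.range p, T ^ (k + 1)) = ∑ k ∈ Finset.range p, T ^ k := by
    have h1 := Finset.sum_range_succ (fun k => T ^ k) p
    have h2 := Finset.sum_range_succ' (fun k => T ^ k) p
    rw [hT] at h1
    rw [pow_zero] at h2
    rw [← pow_zero T, pow_zero] at h1
    have h3 := h2.symm.trans h1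
    exact add_right_cancel h3
  have hTNT : ∀ x, T (NT x) = NT x := by
    have h : T * NT = NT := by
      rw [hNTdef, Finset.mul_sum]
      calc ∑ k ∈ Finset.range p, T * T ^ k
          = ∑ k ∈ Finset.range p, T ^ (k + 1) :=
            Finset.sum_congr rfl fun k _ => (pow_succ' T k).symm
        _ = ∑ k ∈ Finset.range p, T ^ k := hTsum
    intro x
    conv_rhs => rw [← h]
    rfl
  have hNTT : ∀ x, NT (T x) = NT x := by
    have h : NT * T = NT := by
      rw [hNTdef, Finset.sum_mul]
      calc ∑ k ∈ Finset.range p, T ^ k * T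
          = ∑ k ∈ Finset.range p, T ^ (k + 1) :=
            Finset.sum_congr rfl fun k _ => (pow_succ T k).symm
        _ = ∑ k ∈ Finset.range p, T ^ k := hTsum
    intro x
    conv_rhs => rw [← h]
    rfl
  have hNTfix : ∀ x : M, T x = x → NT x = p • x := fun x hx => by
    rw [hNT_apply, Finset.sum_congr rfl (fun k _ => hfix k x hx),
      Finset.sum_const, Finset.card_range]
  have hNTι : ∀ a' : ZMod p → ℤ_[p],
      NT (ι a') = ι (∑ k ∈ Finset.range p, (σ ^ k) a') := fun a' => by
    rw [hNT_apply, Finset.sum_congr rfl (fun k _ => hcomm k a'), ← map_sum]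
  -- Step E: the first coordinate
  choose F hF using fun x : M => hker (NT x) (hπNT x)
  have hFadd : ∀ x y, F (x + y) = F x + F y := fun x y =>
    hι (by rw [map_add, hF, hF, hF, map_add])
  have hFsmul : ∀ (r : ℤ_[p]) (x : M), F (r • x) = r • F x := fun r x =>
    hι (by rw [map_smul, hF, hF, map_smul])
  have hFT : ∀ x, F (T x) = F x := fun x =>
    hι (by rw [hF, hF, hNTT])
  have hFm : F m = ν := hι (by rw [hF, hNTfix m hTm, hpm])
  have hFι : ∀ a' : ZMod p → ℤ_[p], F (ι a') = ∑ k ∈ Finset.range p, (σ ^ k) a' :=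
    fun a' => hι (by rw [hF, hNTι])
  let f : M →ₗ[ℤ_[p]] ℤ_[p] :=
    { toFun := fun x => F x 0
      map_add' := fun x y => by show F (x + y) 0 = F x 0 + F y 0; rw [hFadd]; rfl
      map_smul' := fun r x => by show F (r • x) 0 = r • F x 0; rw [hFsmul]; rfl }
  have hfm : f m = 1 := by show F m 0 = 1; rw [hFm]
  have hfι : ∀ a' : ZMod p → ℤ_[p], f (ι a') = augSum p a' := fun a' => by
    show F (ι a') 0 = augSum p a'
    rw [hFι]
    exact shift_sum_apply p a' 0
  have hfT : ∀ x, f (T x) = f x := fun x => by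
    show F (T x) 0 = F x 0
    rw [hFT]
  -- Step F: the second coordinate
  choose G hG using fun x : M => hker (T x - x) (by rw [map_sub, hπe, sub_self])
  have hGaug : ∀ x, G x ∈ augIdeal p := by
    intro x
    have h0 : ι (∑ k ∈ Finset.range p, (σ ^ k) (G x)) = ι 0 := by
      rw [← hNTι, hG, map_zero, map_sub, hNTT, sub_self]
    have h1 := congrFun (hι h0) 0
    rw [shift_sum_apply p (G x) 0] at h1
    exact LinearMap.mem_ker.mpr h1
  have hGadd : ∀ x y, G (x + y) = G x + G y := fun x y =>
    hι (by rw [map_add, hG, hG, hG, map_add]; abel)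
  have hGsmul : ∀ (r : ℤ_[p]) (x : M), G (r • x) = r • G x := fun r x =>
    hι (by rw [map_smul, hG, hG, map_smul, smul_sub])
  have hGT : ∀ x, G (T x) = σ (G x) := fun x =>
    hι (by rw [hG, hιe, hG, map_sub])
  have hGsub : ∀ x y, G (x - y) = G x - G y := fun x y =>
    hι (by rw [map_sub, hG, hG, hG, map_sub]; abel)
  have hGm : G m = 0 := hι (by rw [hG, hTm, sub_self, map_zero])
  have hGι : ∀ b' : ZMod p → ℤ_[p], G (ι b') = σ b' - b' := fun b' =>
    hι (by rw [hG, map_sub, hιe])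
  have hFσ : ∀ x, σ (F x) = F x := fun x => hι (by rw [hιe, hF]; exact hTNT x)
  let g : M →ₗ[ℤ_[p]] ↥(augIdeal p) :=
    { toFun := fun x => ⟨G x, hGaug x⟩
      map_add' := fun x y => Subtype.ext (hGadd x y)
      map_smul' := fun r x => Subtype.ext (hGsmul r x) }
  -- the key vanishing lemma
  have hzero : ∀ x : M, f x = 0 → G x = 0 → x = 0 := by
    intro x hfx hGx
    have hTx : T x = x := by
      have h1 := hG x
      rw [hGx, map_zero] at h1
      have h2 := h1.symm
      rw [sub_eq_zero] at h2
      exact h2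
    have hFx : F x = 0 := by
      funext i
      have h1 : F x i = F x 0 := shift_const p (F x) (hσdef ▸ hFσ x) i
      rw [h1]
      exact hfx
    have hpx : p • x = 0 := by
      rw [← hNTfix x hTx, ← hF x, hFx, map_zero]
    by_cases hπx : π x = 0
    · obtain ⟨d, hd⟩ := hker x hπx
      have h3 : ι (p • d) = 0 := by rw [map_nsmul, hd, hpx]
      have hd0 : p • d = 0 := hι (by rw [h3, map_zero])
      have hdz : d = 0 := by
        funext i
        have h4 := congrFun hd0 i
        simp only [Pi.smul_apply, Pi.zero_apply, nsmul_eq_mul] at h4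
        have hpne : ((p : ℕ) : ℤ_[p]) ≠ 0 := Nat.cast_ne_zero.mpr hppos.ne'
        exact (mul_eq_zero.mp h4).resolve_left hpne
      rw [← hd, hdz, map_zero]
    · obtain ⟨s, h1, h2, h3⟩ := split_of_torsion p T π x hpx hTx hπx
      exact absurd ⟨s, h1, h2, h3⟩ hnonsplit
  have hinj : Function.Injective (f.prod g) := by
    intro x y hxy
    simp only [LinearMap.prod_apply, Function.prod, Prod.mk.injEq] at hxy
    obtain ⟨h1, h2⟩ := hxy
    have h3 : G x = G y := congrArg Subtype.val h2
    have h4 : f (x - y) = 0 := by rw [map_sub, h1, sub_self]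
    have h5 : G (x - y) = 0 := by rw [hGsub, h3, sub_self]
    have := hzero (x - y) h4 h5
    rwa [sub_eq_zero] at this
  have hsurj : Function.Surjective (f.prod g) := by
    rintro ⟨c', a⟩
    have ha : augSum p (a : ZMod p → ℤ_[p]) = 0 := LinearMap.mem_ker.mp a.2
    obtain ⟨b', hb'⟩ := shift_surj p (a : ZMod p → ℤ_[p]) ha
    rw [← hσdef] at hb'
    refine ⟨(c' - augSum p b') • m + ι b', ?_⟩
    have hfv : f ((c' - augSum p b') • m + ι b') = c' := by
      rw [map_add, map_smul, hfm, hfι]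
      simp only [smul_eq_mul, mul_one, RingHom.id_apply]
      ring
    have hgval : G ((c' - augSum p b') • m + ι b') = (a : ZMod p → ℤ_[p]) := by
      rw [hGadd, hGsmul, hGm, smul_zero, zero_add, hGι, hb']
    simp only [LinearMap.prod_apply, Function.prod, Prod.mk.injEq]
    exact ⟨hfv, Subtype.ext hgval⟩
  refine ⟨LinearEquiv.ofBijective (f.prod g) ⟨hinj, hsurj⟩, ?_⟩
  intro x
  show (f.prod g) (T x) = (LinearMap.prodMap (1 : Module.End ℤ_[p] ℤ_[p]) TA) ((f.prod g) x)
  rw [LinearMap.prod_apply, LinearMap.prod_apply, LinearMap.prodMap_apply]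
  refine Prod.ext ?_ ?_
  · show f (T x) = (1 : Module.End ℤ_[p] ℤ_[p]) (f x)
    rw [hfT, Module.End.one_apply]
  · show (⟨G (T x), hGaug (T x)⟩ : ↥(augIdeal p)) = TA ⟨G x, hGaug x⟩
    refine Subtype.ext ?_
    rw [hTA ⟨G x, hGaug x⟩]
    exact hGT x
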